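/- Let ψ(z) = exp((z + 1)/(z − 1))·exp((z − 1)/(z + 1)) = exp(2(z² + 1)/(z² − 1)) for z ∈ 𝔻, and let φ ∈ Aut(𝔻). Then the composition operator C_φ (f ↦ f ∘ φ) is a well-defined algebra automorphism of ψH^∞ if and only if φ(z) = z for all z ∈ 𝔻 or φ(z) = −z for all z ∈ 𝔻. -/

import Mathlib

open Complex Metric Set

local notation "𝔻" => Complex.UnitDisc

/-- The closed unit disc, as a subset of `ℂ`. -/
def cD : Set ℂ := Metric.closedBall 0 1

/-- A function on the open unit disc is analytic (holomorphic):
it is the restriction of a function differentiable on the open unit ball. -/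
def HolOn (f : 𝔻 → ℂ) : Prop :=
  ∃ F : ℂ → ℂ, DifferentiableOn ℂ F (Metric.ball 0 1) ∧ ∀ z : 𝔻, F ↑z = f z

/-- Membership in `H^∞`, the algebra of bounded analytic functions on the unit disc. -/
def MemHinf (f : 𝔻 → ℂ) : Prop :=
  HolOn f ∧ ∃ M : ℝ, ∀ z : 𝔻, ‖f z‖ ≤ M

/-- Membership in the disc algebra `A(𝔻)`: continuous on the closed unit disc,
analytic in its interior. -/
def MemDiscAlg (f : ↥cD → ℂ) : Prop :=
  ∃ F : ℂ → ℂ, ContinuousOn F cD ∧ DifferentiableOn ℂ F (Metric.ball 0 1) ∧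
    ∀ z : ↥cD, F ↑z = f z

/-- `φ ∈ Aut(𝔻)`: a bijective analytic self-map of the unit disc. -/
def IsDiscAut (φ : 𝔻 → 𝔻) : Prop :=
  (∃ F : ℂ → ℂ, DifferentiableOn ℂ F (Metric.ball 0 1) ∧ ∀ z : 𝔻, F ↑z = ↑(φ z)) ∧
  Function.Bijective φ

/-- A Möbius automorphism of the unit disc, given by its global formula
`Φ z = η (a - z) / (1 - conj a * z)` with `|a| < 1`, `|η| = 1`; this is the analytic
extension to (a neighbourhood of) the closed unit disc of a disc automorphism. -/
def IsMobius (Φ : ℂ → ℂ) : Prop :=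
  ∃ a η : ℂ, ‖a‖ < 1 ∧ ‖η‖ = 1 ∧
    ∀ z : ℂ, Φ z = η * (a - z) / (1 - (starRingEnd ℂ) a * z)

/-- `T` is an algebra automorphism of the set `A` of complex-valued functions:
a bijective, `ℂ`-linear and multiplicative self-map of `A`. -/
def IsAlgAutOn {ι : Type} (A : Set (ι → ℂ)) (T : (ι → ℂ) → (ι → ℂ)) : Prop :=
  (∀ f ∈ A, T f ∈ A) ∧
  (∀ f ∈ A, ∀ g ∈ A, T (f + g) = T f + T g) ∧
  (∀ (c : ℂ), ∀ f ∈ A, T (c • f) = c • T f) ∧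
  (∀ f ∈ A, ∀ g ∈ A, T (f * g) = T f * T g) ∧
  Set.InjOn T A ∧ Set.SurjOn T A A

/-- The subalgebra `ψ H^∞ = {ψ · g : g ∈ H^∞}`. -/
def psiH (ψ : 𝔻 → ℂ) : Set (𝔻 → ℂ) :=
  {f | ∃ g, MemHinf g ∧ f = fun z => ψ z * g z}

/-- The subalgebra `ψ A(𝔻) = {ψ · g : g ∈ A(𝔻)}`. -/
def psiA (ψ : ↥cD → ℂ) : Set (↥cD → ℂ) :=
  {f | ∃ g, MemDiscAlg g ∧ f = fun z => ψ z * g z}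

/-- The composition operator `C_φ : f ↦ f ∘ φ` is a well-defined algebra automorphism
of the set `A` (it is automatically linear and multiplicative). -/
def CompAutOn (A : Set (𝔻 → ℂ)) (φ : 𝔻 → 𝔻) : Prop :=
  (∀ f ∈ A, f ∘ φ ∈ A) ∧ Set.InjOn (fun f => f ∘ φ) A ∧ Set.SurjOn (fun f => f ∘ φ) A A

/-- The Möbius factor `τ_a(z) = (a - z)/(1 - conj a · z)`. -/
noncomputable def mobius (a z : ℂ) : ℂ := (a - z) / (1 - (starRingEnd ℂ) a * z)

/-- `f` has a zero of order (multiplicity) `k` at `w`: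
`f z = (z - w)^k g z` with `g` analytic and `g w ≠ 0`. -/
def ZeroOrderAt (f : 𝔻 → ℂ) (w : 𝔻) (k : ℕ) : Prop :=
  ∃ g : 𝔻 → ℂ, HolOn g ∧ g w ≠ 0 ∧ ∀ z : 𝔻, f z = ((z : ℂ) - (w : ℂ)) ^ k * g z

/-- `g` is an invertible element of `H^∞`. -/
def InvHinf (g : 𝔻 → ℂ) : Prop :=
  MemHinf g ∧ ∃ h : 𝔻 → ℂ, MemHinf h ∧ ∀ z, g z * h z = 1

/-- `g` is an invertible element of the disc algebra `A(𝔻)`. -/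
def InvDiscAlg (g : ↥cD → ℂ) : Prop :=
  MemDiscAlg g ∧ ∃ h : ↥cD → ℂ, MemDiscAlg h ∧ ∀ z, g z * h z = 1

-- ===================== auxiliary development =====================
open ComplexConjugate Filter Topology
set_option maxHeartbeats 1000000

/-- compatibility: the complex absolute value as an `AbsoluteValue`, equal to the norm. -/
noncomputable def Complex.abs : AbsoluteValue ℂ ℝ where
  toFun z := ‖z‖
  map_mul' := norm_mul
  nonneg' := norm_nonneg
  eq_zero' _ := norm_eq_zero
  add_le' := norm_add_le

lemma Complex.abs_apply (z : ℂ) : Complex.abs z = ‖z‖ := rfl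

lemma Complex.norm_eq_abs (z : ℂ) : ‖z‖ = Complex.abs z := rfl

lemma Complex.abs_exp (z : ℂ) : Complex.abs (Complex.exp z) = Real.exp z.re := Complex.norm_exp z

lemma Complex.sq_abs (z : ℂ) : Complex.abs z ^ 2 = normSq z := Complex.sq_norm z

lemma Complex.normSq_eq_abs (z : ℂ) : normSq z = Complex.abs z ^ 2 := (Complex.sq_norm z).symm

lemma Complex.abs_conj (z : ℂ) : Complex.abs (conj z) = Complex.abs z := Complex.norm_conj z

lemma Complex.abs_ofReal (r : ℝ) : Complex.abs (r : ℂ) = |r| := Complex.norm_real r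

lemma Complex.abs_exp_ofReal_mul_I (x : ℝ) : Complex.abs (Complex.exp (x * I)) = 1 :=
  Complex.norm_exp_ofReal_mul_I x

lemma Complex.UnitDisc.abs_lt_one (z : 𝔻) : Complex.abs (z : ℂ) < 1 := z.norm_lt_one

lemma Complex.abs_le_abs_of_mapsTo_ball_self {f : ℂ → ℂ} {R : ℝ} {z : ℂ}
    (hd : DifferentiableOn ℂ f (ball 0 R)) (h_maps : MapsTo f (ball 0 R) (ball 0 R))
    (h₀ : f 0 = 0) (hz : Complex.abs z < R) : Complex.abs (f z) ≤ Complex.abs z :=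
  norm_le_norm_of_mapsTo_ball hd (h_maps.mono_right ball_subset_closedBall) h₀ hz


noncomputable def psiFun (z : ℂ) : ℂ :=
  Complex.exp ((z + 1) / (z - 1)) * Complex.exp ((z - 1) / (z + 1))

noncomputable def rho (w : ℂ) : ℝ :=
  (1 - normSq w) / normSq (1 - w) + (1 - normSq w) / normSq (1 + w)

lemma re_div_aux (z : ℂ) : ((z + 1) / (z - 1)).re = -((1 - normSq z) / normSq (1 - z)) := by
  rw [div_re]
  rw [show normSq (1 - z) = (z-1).re*(z-1).re + (z-1).im*(z-1).im from by simp [normSq_apply]; ring]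
  simp [normSq_apply]
  ring

lemma re_div_aux2 (z : ℂ) : ((z - 1) / (z + 1)).re = -((1 - normSq z) / normSq (1 + z)) := by
  rw [div_re]
  rw [show normSq (1 + z) = (z+1).re*(z+1).re + (z+1).im*(z+1).im from by simp [normSq_apply]; ring]
  simp [normSq_apply]
  ring

lemma abs_psiFun (z : ℂ) : Complex.abs (psiFun z) = Real.exp (-(rho z)) := by
  rw [psiFun, map_mul, Complex.abs_exp, Complex.abs_exp, ← Real.exp_add, re_div_aux, re_div_aux2,
    rho]
  ring_nf

lemma rho_nonneg {z : ℂ} (hz : Complex.abs z < 1) : 0 ≤ rho z := by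
  have h1 : normSq z < 1 := by
    rw [← Complex.sq_abs]
    exact pow_lt_one₀ (Complex.abs.nonneg z) hz (by norm_num)
  have h2 := normSq_nonneg (1 - z)
  have h3 := normSq_nonneg (1 + z)
  rw [rho]
  exact add_nonneg (div_nonneg (by linarith) h2) (div_nonneg (by linarith) h3)

lemma rho_neg (w : ℂ) : rho (-w) = rho w := by
  simp only [rho, normSq_neg, sub_neg_eq_add]
  rw [show (1:ℂ) + -w = 1 - w by ring]
  ring
noncomputable def psiD : 𝔻 → ℂ := fun z =>
  Complex.exp (((z : ℂ) + 1) / ((z : ℂ) - 1)) * Complex.exp (((z : ℂ) - 1) / ((z : ℂ) + 1))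

lemma psiD_eq (z : 𝔻) : psiD z = psiFun ↑z := rfl

lemma psiFun_differentiableOn : DifferentiableOn ℂ psiFun (ball 0 1) := by
  have h1 : ∀ z ∈ ball (0:ℂ) 1, z - 1 ≠ 0 := by
    intro z hz h
    rw [mem_ball_zero_iff] at hz
    rw [sub_eq_zero] at h
    simp [h] at hz
  have h2 : ∀ z ∈ ball (0:ℂ) 1, z + 1 ≠ 0 := by
    intro z hz h
    rw [mem_ball_zero_iff] at hz
    have : z = -1 := by linear_combination h
    simp [this] at hz
  exact (((differentiableOn_id.add_const 1).div (differentiableOn_id.sub_const 1) h1).cexp).mul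
    (((differentiableOn_id.sub_const 1).div (differentiableOn_id.add_const 1) h2).cexp)

lemma psiD_memHinf : MemHinf psiD := by
  refine ⟨⟨psiFun, psiFun_differentiableOn, fun z => rfl⟩, 1, fun z => ?_⟩
  rw [psiD_eq, Complex.norm_eq_abs, abs_psiFun]
  exact Real.exp_le_one_iff.mpr (neg_nonpos.mpr (rho_nonneg z.abs_lt_one))

lemma one_memHinf : MemHinf (fun _ : 𝔻 => 1) :=
  ⟨⟨fun _ => 1, differentiableOn_const 1, fun _ => rfl⟩, 1, fun _ => by simp⟩

lemma psiD_mem : psiD ∈ psiH psiD :=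
  ⟨fun _ => 1, one_memHinf, by funext z; simp⟩

lemma psiD_ne_zero (z : 𝔻) : psiD z ≠ 0 :=
  mul_ne_zero (Complex.exp_ne_zero _) (Complex.exp_ne_zero _)

lemma bound_of_compAut (φ : 𝔻 → 𝔻) (h : CompAutOn (psiH psiD) φ) :
    ∃ K : ℝ, 0 ≤ K ∧ ∀ z : 𝔻, |rho ↑(φ z) - rho ↑z| ≤ K := by
  obtain ⟨g, hgH, hcomp⟩ := h.1 psiD psiD_mem
  obtain ⟨Mg, hMg⟩ := hgH.2
  obtain ⟨f, hfA, hf⟩ := h.2.2 psiD_mem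
  obtain ⟨u, huH, hfeq⟩ := hfA
  obtain ⟨Mu, hMu⟩ := huH.2
  set Mg' : ℝ := max Mg 1 with hMg'
  set Mu' : ℝ := max Mu 1 with hMu'
  have hMg'1 : (1:ℝ) ≤ Mg' := le_max_right _ _
  have hMu'1 : (1:ℝ) ≤ Mu' := le_max_right _ _
  refine ⟨max (Real.log Mg') (Real.log Mu'), le_max_of_le_left (Real.log_nonneg hMg'1),
    fun z => ?_⟩
  have h1 : psiD (φ z) = psiD z * g z := congrFun hcomp z
  have h2 : psiD (φ z) * u (φ z) = psiD z := by
    have := congrFun hf z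
    simp only [Function.comp_apply] at this
    rw [← this, hfeq]
  -- upper bound on rho (φ z) - rho z : from h2
  have e2 : Real.exp (-(rho ↑z)) ≤ Real.exp (-(rho ↑(φ z))) * Mu' := by
    calc Real.exp (-(rho ↑z)) = Complex.abs (psiD z) := by rw [psiD_eq, abs_psiFun]
    _ = Complex.abs (psiD (φ z)) * Complex.abs (u (φ z)) := by rw [← map_mul, h2]
    _ ≤ Complex.abs (psiD (φ z)) * Mu' := by
        refine mul_le_mul_of_nonneg_left ?_ (Complex.abs.nonneg _)
        exact le_trans (hMu (φ z)) (le_max_left _ _)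
    _ = Real.exp (-(rho ↑(φ z))) * Mu' := by rw [psiD_eq, abs_psiFun]
  have e1 : Real.exp (-(rho ↑(φ z))) ≤ Real.exp (-(rho ↑z)) * Mg' := by
    calc Real.exp (-(rho ↑(φ z))) = Complex.abs (psiD (φ z)) := by rw [psiD_eq, abs_psiFun]
    _ = Complex.abs (psiD z) * Complex.abs (g z) := by rw [← map_mul, h1]
    _ ≤ Complex.abs (psiD z) * Mg' := by
        refine mul_le_mul_of_nonneg_left ?_ (Complex.abs.nonneg _)
        exact le_trans (hMg z) (le_max_left _ _)
    _ = Real.exp (-(rho ↑z)) * Mg' := by rw [psiD_eq, abs_psiFun]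
  have hMg'0 : (0:ℝ) < Mg' := lt_of_lt_of_le one_pos hMg'1
  have hMu'0 : (0:ℝ) < Mu' := lt_of_lt_of_le one_pos hMu'1
  rw [abs_le]
  constructor
  · -- -(K) ≤ rho φz - rho z  i.e. rho z - rho φz ≤ K : from e1
    have : Real.exp (-(rho ↑(φ z))) ≤ Real.exp (-(rho ↑z) + Real.log Mg') := by
      rwa [Real.exp_add, Real.exp_log hMg'0]
    have := Real.exp_le_exp.mp this
    have hle : rho ↑z - rho ↑(φ z) ≤ Real.log Mg' := by linarith
    have : rho ↑z - rho ↑(φ z) ≤ max (Real.log Mg') (Real.log Mu') :=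
      le_trans hle (le_max_left _ _)
    linarith
  · have : Real.exp (-(rho ↑z)) ≤ Real.exp (-(rho ↑(φ z)) + Real.log Mu') := by
      rwa [Real.exp_add, Real.exp_log hMu'0]
    have := Real.exp_le_exp.mp this
    have hle : rho ↑(φ z) - rho ↑z ≤ Real.log Mu' := by linarith
    exact le_trans hle (le_max_right _ _)
/-- helper: a quantity `1/(1-r)` cannot be bounded on a tail of `(0,1)`. -/
lemma no_tail_bound (r₀ B : ℝ) (hr₀ : r₀ < 1)
    (h : ∀ r : ℝ, r₀ ≤ r → 0 ≤ r → r < 1 → 1/(1-r) ≤ B) : False := by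
  set B' := max B 1 with hB'
  have hB'1 : (1:ℝ) ≤ B' := le_max_right _ _
  set r : ℝ := max (max r₀ 0) (1 - 1/(B'+1)) with hrdef
  have hpos : 0 < 1/(B'+1) := by positivity
  have hr1 : r < 1 := by
    apply max_lt (max_lt hr₀ one_pos)
    linarith
  have hrr0 : r₀ ≤ r := le_trans (le_max_left _ _) (le_max_left _ _)
  have hr0 : 0 ≤ r := le_trans (le_max_right _ _) (le_max_left _ _)
  have h1r : 1 - r ≤ 1/(B'+1) := by
    have : 1 - 1/(B'+1) ≤ r := le_max_right _ _
    linarith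
  have h1rpos : 0 < 1 - r := by linarith
  have : B' + 1 ≤ 1/(1-r) := by
    rw [le_div_iff₀ h1rpos]
    calc (B'+1) * (1-r) ≤ (B'+1) * (1/(B'+1)) := by
          apply mul_le_mul_of_nonneg_left h1r (by linarith)
    _ = 1 := by field_simp
  have hB : 1/(1-r) ≤ B := h r hrr0 hr0 hr1
  have : B ≤ B' := le_max_left _ _
  linarith

lemma rho_real_eq (r : ℝ) (hr1 : -1 < r) (hr2 : r < 1) :
    rho (r:ℂ) = (1+r)/(1-r) + (1-r)/(1+r) := by
  have e1 : (1:ℂ) - (r:ℂ) = ((1 - r : ℝ) : ℂ) := by push_cast; ring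
  have e2 : (1:ℂ) + (r:ℂ) = ((1 + r : ℝ) : ℂ) := by push_cast; ring
  rw [rho, e1, e2, normSq_ofReal, normSq_ofReal, normSq_ofReal]
  have h1 : (1:ℝ) - r ≠ 0 := by linarith
  have h2 : (1:ℝ) + r ≠ 0 := by linarith
  field_simp
  ring

lemma normSq_key (a : ℂ) (r : ℝ) :
    normSq (1 - conj a * r) - normSq (a - r) = (1 - normSq a) * (1 - r^2) := by
  simp only [normSq_apply, mul_re, mul_im, sub_re, sub_im, one_re, one_im, conj_re, conj_im,
    ofReal_re, ofReal_im]
  ring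

lemma rho_phi (a η : ℂ) (ha : Complex.abs a < 1) (hη : Complex.abs η = 1) (r : ℝ)
    (hr1 : -1 < r) (hr2 : r < 1) :
    rho (η * (a - r) / (1 - conj a * r)) =
      (1 - normSq a) * (1 - r^2) / normSq ((1 - conj a * r) - η * (a - r)) +
      (1 - normSq a) * (1 - r^2) / normSq ((1 - conj a * r) + η * (a - r)) := by
  set c : ℂ := 1 - conj a * r with hc
  have habs : Complex.abs (conj a * r) < 1 := by
    rw [map_mul, Complex.abs_conj, Complex.abs_ofReal]
    have : |r| < 1 := abs_lt.mpr ⟨hr1, hr2⟩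
    nlinarith [Complex.abs.nonneg a, abs_nonneg r]
  have hcne : c ≠ 0 := by
    intro h
    rw [hc, sub_eq_zero] at h
    rw [← h] at habs
    simp at habs
  have hnsc : normSq c ≠ 0 := by simpa [normSq_eq_zero] using hcne
  have hnsη : normSq η = 1 := by rw [normSq_eq_abs, hη]; norm_num
  have hkey : normSq c - normSq (a - r) = (1 - normSq a) * (1 - r^2) := normSq_key a r
  have hpos : 0 < (1 - normSq a) * (1 - r^2) := by
    have h1 : normSq a < 1 := by rw [← Complex.sq_abs]; nlinarith [Complex.abs.nonneg a]
    have h2 : r^2 < 1 := by nlinarith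
    exact mul_pos (by linarith) (by linarith)
  have hNne : c - η * (a - r) ≠ 0 := by
    intro h
    rw [sub_eq_zero] at h
    have : normSq c = normSq (a - r) := by rw [h, normSq_mul, hnsη, one_mul]
    rw [this, sub_self] at hkey
    linarith
  have hMne : c + η * (a - r) ≠ 0 := by
    intro h
    have h' : c = -(η * (a - r)) := by linear_combination h
    have : normSq c = normSq (a - r) := by rw [h', normSq_neg, normSq_mul, hnsη, one_mul]
    rw [this, sub_self] at hkey
    linarith
  have h1Φ : (1:ℂ) - η * (a - r) / c = (c - η * (a - r)) / c := by field_simp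
  have h2Φ : (1:ℂ) + η * (a - r) / c = (c + η * (a - r)) / c := by field_simp
  have hnum : 1 - normSq (η * (a - r) / c) = (1 - normSq a) * (1 - r^2) / normSq c := by
    rw [normSq_div, normSq_mul, hnsη, one_mul, eq_div_iff hnsc]
    field_simp
    linarith [hkey]
  rw [rho, h1Φ, h2Φ, hnum, normSq_div, normSq_div]
  have hN : normSq (c - η * (a - r)) ≠ 0 := by simpa [normSq_eq_zero] using hNne
  have hM : normSq (c + η * (a - r)) ≠ 0 := by simpa [normSq_eq_zero] using hMne
  field_simp

lemma abs_sub_le' (x y : ℂ) : Complex.abs (x - y) ≤ Complex.abs x + Complex.abs y := by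
  simpa [Complex.norm_eq_abs] using norm_sub_le x y

lemma abs_add_ge (X Y : ℂ) : Complex.abs X - Complex.abs Y ≤ Complex.abs (X + Y) := by
  have h : Complex.abs ((X + Y) - Y) ≤ Complex.abs (X + Y) + Complex.abs Y := abs_sub_le' _ _
  rw [add_sub_cancel_right] at h
  linarith

lemma caseN (a η : ℂ) (ha : Complex.abs a < 1) (hη : Complex.abs η = 1) (K : ℝ) (hK : 0 ≤ K)
    (hb : ∀ r : ℝ, -1 < r → r < 1 → |rho (η * (a - r) / (1 - conj a * r)) - rho r| ≤ K)
    (hN : (1 - conj a) + η * (1 - a) = 0) : a = 0 ∧ η = -1 := by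
  have h1a : (1:ℂ) - a ≠ 0 := by
    intro h; rw [sub_eq_zero] at h; rw [← h] at ha; simp at ha
  have hnsa : normSq a < 1 := by rw [← Complex.sq_abs]; nlinarith [Complex.abs.nonneg a]
  have ht0 : 0 ≤ normSq a := normSq_nonneg a
  set t := normSq a with ht
  set A := Complex.abs (1 - a) with hA
  have hA0 : 0 < A := Complex.abs.pos h1a
  have hA2 : normSq (1 - a) = A^2 := by rw [hA, normSq_eq_abs]
  have habsconj : Complex.abs (1 - conj a) = A := by
    rw [show (1:ℂ) - conj a = conj (1 - a) by rw [map_sub, map_one], Complex.abs_conj]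
  -- formula for N r
  have hNr : ∀ r : ℝ, (1 - conj a * r) - η * (a - r) = (((1-r) * (1 - t) : ℝ) : ℂ) / (1 - a) := by
    intro r
    rw [eq_div_iff h1a]
    push_cast
    linear_combination ((r:ℂ) - a) * hN - (1 - (r:ℂ)) * (Complex.mul_conj a)
  have hnsN : ∀ r : ℝ, normSq ((1 - conj a * r) - η * (a - r))
      = ((1-r) * (1-t))^2 / A^2 := by
    intro r
    rw [hNr r, normSq_div, normSq_ofReal, hA2]
    ring
  have hterm1 : ∀ r : ℝ, -1 < r → r < 1 →
      (1 - t) * (1 - r^2) / normSq ((1 - conj a * r) - η * (a - r))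
      = (A^2/(1-t)) * ((1+r)/(1-r)) := by
    intro r h1 h2
    rw [hnsN r]
    have hr : (1:ℝ) - r ≠ 0 := by linarith
    have h1t : (1:ℝ) - t ≠ 0 := by linarith
    have hAne : A ≠ 0 := ne_of_gt hA0
    field_simp
    ring
  -- the M function and its tail lower bound near r = 1
  have hMid : ∀ r : ℝ, (1 - conj a * r) + η * (a - r)
      = (2 - 2*conj a) + (1-(r:ℂ)) * (conj a + η) := by
    intro r
    linear_combination (-1 : ℂ) * hN
  have habsaη : Complex.abs (conj a + η) ≤ 2 := by
    calc Complex.abs (conj a + η) ≤ Complex.abs (conj a) + Complex.abs η :=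
          Complex.abs.add_le _ _
    _ ≤ 2 := by rw [Complex.abs_conj, hη]; linarith
  have habsM : ∀ r : ℝ, 1 - r ≤ A/2 → 0 ≤ 1 - r →
      A ≤ Complex.abs ((1 - conj a * r) + η * (a - r)) := by
    intro r hr hr'
    rw [hMid r]
    have h2A : Complex.abs (2 - 2*conj a) = 2*A := by
      rw [show (2:ℂ) - 2*conj a = 2*(1 - conj a) by ring, map_mul, habsconj]
      simp [Complex.abs_apply]
    have hY : Complex.abs ((1-(r:ℂ)) * (conj a + η)) ≤ (1-r)*2 := by
      rw [map_mul]
      have h1 : Complex.abs (1-(r:ℂ)) = 1 - r := by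
        rw [show (1:ℂ) - (r:ℂ) = ((1-r:ℝ):ℂ) by push_cast; ring, Complex.abs_ofReal,
          _root_.abs_of_nonneg hr']
      rw [h1]
      exact mul_le_mul_of_nonneg_left habsaη hr'
    have := abs_add_ge (2 - 2*conj a) ((1-(r:ℂ)) * (conj a + η))
    rw [h2A] at this
    linarith
  have hnsM_tail : ∀ r : ℝ, 1 - r ≤ A/2 → 0 ≤ 1 - r →
      A^2 ≤ normSq ((1 - conj a * r) + η * (a - r)) := by
    intro r h1 h2
    rw [normSq_eq_abs]
    have := habsM r h1 h2
    nlinarith [Complex.abs.nonneg ((1 - conj a * r) + η * (a - r))]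
  -- Step 1 : lambda = 1
  have hlam : A^2/(1-t) = 1 := by
    by_contra hlam
    have hd : 0 < |A^2/(1-t) - 1| := abs_pos.mpr (sub_ne_zero.mpr hlam)
    refine no_tail_bound (1 - A/2) ((K + 1/A^2 + 1)/|A^2/(1-t) - 1|) (by linarith) ?_
    intro r hr₀ hr0 hr1
    have hrm1 : (-1:ℝ) < r := by linarith
    have e := hb r hrm1 hr1
    rw [rho_phi a η ha hη r hrm1 hr1, rho_real_eq r hrm1 hr1, hterm1 r hrm1 hr1] at e
    set T := (1 - t) * (1 - r^2) / normSq ((1 - conj a * r) + η * (a - r)) with hT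
    have hnsM := hnsM_tail r (by linarith) (by linarith)
    have hT0 : 0 ≤ T := by
      rw [hT]
      apply div_nonneg _ (normSq_nonneg _)
      exact mul_nonneg (by linarith) (by nlinarith)
    have hTle : T ≤ 1/A^2 := by
      rw [hT]
      apply div_le_div₀ (by norm_num) (by nlinarith) (pow_pos hA0 2) hnsM
    have h1r : 0 < 1 - r := by linarith
    have h1rp : 0 < 1 + r := by linarith
    have hW0 : 0 ≤ (1-r)/(1+r) := by positivity
    have hW1 : (1-r)/(1+r) ≤ 1 := by rw [div_le_one h1rp]; linarith
    have hq0 : 0 ≤ (1+r)/(1-r) := by positivity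
    have eb := abs_le.mp e
    have key : (A^2/(1-t) - 1) * ((1+r)/(1-r)) =
        (A^2/(1-t) * ((1+r)/(1-r)) + T - ((1+r)/(1-r) + (1-r)/(1+r))) - T + ((1-r)/(1+r)) := by
      ring
    have hmain : |A^2/(1-t) - 1| * ((1+r)/(1-r)) ≤ K + 1/A^2 + 1 := by
      rw [show |A^2/(1-t) - 1| * ((1+r)/(1-r)) = |(A^2/(1-t) - 1) * ((1+r)/(1-r))| by
        rw [abs_mul, _root_.abs_of_nonneg hq0]]
      rw [abs_le]
      constructor
      · rw [key]; linarith [eb.1]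
      · rw [key]; linarith [eb.2]
    have hq1 : 1/(1-r) ≤ (1+r)/(1-r) := by gcongr <;> linarith
    rw [le_div_iff₀ hd]
    calc 1/(1-r) * |A^2/(1-t) - 1| ≤ (1+r)/(1-r) * |A^2/(1-t) - 1| := by
          apply mul_le_mul_of_nonneg_right hq1 (le_of_lt hd)
    _ = |A^2/(1-t) - 1| * ((1+r)/(1-r)) := by ring
    _ ≤ K + 1/A^2 + 1 := hmain
  have hA2t : A^2 = 1 - t := by
    have h1t : (1:ℝ) - t ≠ 0 := by linarith
    field_simp at hlam
    linarith
  -- Step 2 : M(-1) = 0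
  have hm1 : (1 + conj a) + η * (1 + a) = 0 := by
    by_contra hm
    have hμ0 : 0 < Complex.abs ((1 + conj a) + η * (1 + a)) := Complex.abs.pos hm
    set μ := Complex.abs ((1 + conj a) + η * (1 + a)) with hμ
    refine no_tail_bound (1 - μ/4) (K + 4/μ^2) (by linarith) ?_
    intro s hs₀ hs0 hs1
    have hsm1 : (-1:ℝ) < -s := by linarith
    have hsl1 : (-s:ℝ) < 1 := by linarith
    have e := hb (-s) hsm1 hsl1
    rw [rho_phi a η ha hη (-s) hsm1 hsl1, rho_real_eq (-s) hsm1 hsl1,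
      hterm1 (-s) hsm1 hsl1, hlam] at e
    -- bound on M(-s)
    have hMs : (1 - conj a * ((-s:ℝ):ℂ)) + η * (a - ((-s:ℝ):ℂ))
        = ((1 + conj a) + η * (1 + a)) + (-(((1-s:ℝ):ℂ)))*(conj a + η) := by
      push_cast
      ring
    have habsMs : μ/2 ≤ Complex.abs ((1 - conj a * ((-s:ℝ):ℂ)) + η * (a - ((-s:ℝ):ℂ))) := by
      rw [hMs]
      have hY : Complex.abs ((-(((1-s:ℝ):ℂ)))*(conj a + η)) ≤ (1-s)*2 := by
        rw [map_mul, Complex.abs.map_neg, Complex.abs_ofReal, _root_.abs_of_nonneg (by linarith : (0:ℝ) ≤ 1 - s)]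
        exact mul_le_mul_of_nonneg_left habsaη (by linarith)
      have := abs_add_ge ((1 + conj a) + η * (1 + a)) ((-(((1-s:ℝ):ℂ)))*(conj a + η))
      rw [← hμ] at this
      linarith
    have hnsMs : μ^2/4 ≤ normSq ((1 - conj a * ((-s:ℝ):ℂ)) + η * (a - ((-s:ℝ):ℂ))) := by
      rw [normSq_eq_abs]
      nlinarith [Complex.abs.nonneg ((1 - conj a * ((-s:ℝ):ℂ)) + η * (a - ((-s:ℝ):ℂ)))]
    set T := (1 - t) * (1 - (-s)^2) / normSq ((1 - conj a * ((-s:ℝ):ℂ)) + η * (a - ((-s:ℝ):ℂ)))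
      with hT
    have hsq0 : 0 ≤ (1:ℝ) - (-s)^2 := by nlinarith
    have hT0 : 0 ≤ T := by
      rw [hT]
      apply div_nonneg _ (normSq_nonneg _)
      exact mul_nonneg (by linarith) hsq0
    have hTle : T ≤ 4/μ^2 := by
      rw [hT, show (4:ℝ)/μ^2 = 1/(μ^2/4) from (one_div_div _ _).symm]
      apply div_le_div₀ (by norm_num) (by nlinarith) (div_pos (pow_pos hμ0 2) (by norm_num)) hnsMs
    -- e : |1 * ((1+(-s))/(1-(-s))) + T - ((1+(-s))/(1-(-s)) + (1-(-s))/(1+(-s)))| ≤ K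
    have eb := abs_le.mp e
    have h1s : 0 < 1 - s := by linarith
    have h1sp : 0 < 1 + s := by linarith
    have hkey : 1 * ((1+(-s))/(1-(-s))) + T - ((1+(-s))/(1-(-s)) + (1-(-s))/(1+(-s)))
        = T - (1+s)/(1-s) := by ring_nf
    rw [hkey] at eb
    have hq1 : 1/(1-s) ≤ (1+s)/(1-s) := by gcongr <;> linarith
    have : (1+s)/(1-s) ≤ K + T := by linarith [eb.1]
    linarith
  -- final algebra
  have hη1 : η = -1 := by linear_combination (1/2 : ℂ) * hN + (1/2 : ℂ) * hm1
  have hare : conj a = a := by linear_combination (-1 : ℂ) * hN + (1 - a) * hη1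
  have him : a.im = 0 := by
    have := congrArg Complex.im hare
    simp at this
    linarith
  have hre : a.re = 0 := by
    have h1 : normSq (1 - a) = (1 - a.re)^2 + a.im^2 := by
      simp [normSq_apply]
      ring
    have h2 : t = a.re^2 + a.im^2 := by rw [ht]; simp [normSq_apply]; ring
    have h3 : (1 - a.re)^2 + a.im^2 = 1 - (a.re^2 + a.im^2) := by
      rw [← h1, hA2, hA2t, h2]
    rw [him] at h3
    have hxlt : a.re^2 < 1 := by
      rw [h2, him] at hnsa
      nlinarith
    ring_nf at h3
    have hxx : a.re^2 = a.re := by linarith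
    have hfact : a.re * (a.re - 1) = 0 := by linear_combination hxx
    rcases mul_eq_zero.mp hfact with h | h
    · exact h
    · exfalso
      have : a.re = 1 := by linarith
      rw [this] at hxlt
      norm_num at hxlt
  constructor
  · exact Complex.ext hre him
  · exact hη1

lemma step1 (a η : ℂ) (ha : Complex.abs a < 1) (hη : Complex.abs η = 1) (K : ℝ) (hK : 0 ≤ K)
    (hb : ∀ r : ℝ, -1 < r → r < 1 → |rho (η * (a - r) / (1 - conj a * r)) - rho r| ≤ K) :
    (1 - conj a) + η * (1 - a) = 0 ∨ (1 - conj a) - η * (1 - a) = 0 := by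
  by_contra h
  push_neg at h
  obtain ⟨hn, hm⟩ := h
  have hnsa : normSq a < 1 := by rw [← Complex.sq_abs]; nlinarith [Complex.abs.nonneg a]
  have ht0 : 0 ≤ normSq a := normSq_nonneg a
  set t := normSq a with ht
  have hε1 : 0 < Complex.abs ((1 - conj a) + η * (1 - a)) := Complex.abs.pos hn
  have hε2 : 0 < Complex.abs ((1 - conj a) - η * (1 - a)) := Complex.abs.pos hm
  set ε := min (Complex.abs ((1 - conj a) + η * (1 - a)))
    (Complex.abs ((1 - conj a) - η * (1 - a))) with hε
  have hε0 : 0 < ε := lt_min hε1 hε2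
  have habsaη1 : Complex.abs (conj a - η) ≤ 2 := by
    calc Complex.abs (conj a - η) ≤ Complex.abs (conj a) + Complex.abs η := abs_sub_le' _ _
    _ ≤ 2 := by rw [Complex.abs_conj, hη]; linarith
  have habsaη2 : Complex.abs (conj a + η) ≤ 2 := by
    calc Complex.abs (conj a + η) ≤ Complex.abs (conj a) + Complex.abs η :=
          Complex.abs.add_le _ _
    _ ≤ 2 := by rw [Complex.abs_conj, hη]; linarith
  refine no_tail_bound (1 - ε/4) (K + 1/(ε^2/4) + 1/(ε^2/4)) (by linarith) ?_
  intro r hr₀ hr0 hr1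
  have hrm1 : (-1:ℝ) < r := by linarith
  have e := hb r hrm1 hr1
  rw [rho_phi a η ha hη r hrm1 hr1, rho_real_eq r hrm1 hr1] at e
  have h1r : 0 < 1 - r := by linarith
  have h1rp : 0 < 1 + r := by linarith
  -- lower bounds for N r and M r
  have hNid : (1 - conj a * (r:ℂ)) - η * (a - r)
      = ((1 - conj a) + η * (1 - a)) + ((1:ℂ)-r) * (conj a - η) := by push_cast; ring
  have hMid : (1 - conj a * (r:ℂ)) + η * (a - r)
      = ((1 - conj a) - η * (1 - a)) + ((1:ℂ)-r) * (conj a + η) := by push_cast; ring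
  have habs1r : Complex.abs ((1:ℂ)-r) = 1 - r := by
    rw [show (1:ℂ) - (r:ℂ) = ((1-r:ℝ):ℂ) by push_cast; ring, Complex.abs_ofReal,
      _root_.abs_of_nonneg (by linarith : (0:ℝ) ≤ 1-r)]
  have hNlow : ε/2 ≤ Complex.abs ((1 - conj a * (r:ℂ)) - η * (a - r)) := by
    rw [hNid]
    have hY : Complex.abs (((1:ℂ)-r) * (conj a - η)) ≤ (1-r)*2 := by
      rw [map_mul, habs1r]
      exact mul_le_mul_of_nonneg_left habsaη1 (by linarith)
    have h := abs_add_ge ((1 - conj a) + η * (1 - a)) (((1:ℂ)-r) * (conj a - η))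
    have : ε ≤ Complex.abs ((1 - conj a) + η * (1 - a)) := min_le_left _ _
    linarith
  have hMlow : ε/2 ≤ Complex.abs ((1 - conj a * (r:ℂ)) + η * (a - r)) := by
    rw [hMid]
    have hY : Complex.abs (((1:ℂ)-r) * (conj a + η)) ≤ (1-r)*2 := by
      rw [map_mul, habs1r]
      exact mul_le_mul_of_nonneg_left habsaη2 (by linarith)
    have h := abs_add_ge ((1 - conj a) - η * (1 - a)) (((1:ℂ)-r) * (conj a + η))
    have : ε ≤ Complex.abs ((1 - conj a) - η * (1 - a)) := min_le_right _ _
    linarith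
  have hNns : ε^2/4 ≤ normSq ((1 - conj a * (r:ℂ)) - η * (a - r)) := by
    rw [normSq_eq_abs]
    nlinarith [Complex.abs.nonneg ((1 - conj a * (r:ℂ)) - η * (a - r))]
  have hMns : ε^2/4 ≤ normSq ((1 - conj a * (r:ℂ)) + η * (a - r)) := by
    rw [normSq_eq_abs]
    nlinarith [Complex.abs.nonneg ((1 - conj a * (r:ℂ)) + η * (a - r))]
  have hnum : (1 - t) * (1 - r^2) ≤ 1 := by nlinarith
  have hnum0 : 0 ≤ (1 - t) * (1 - r^2) := mul_nonneg (by linarith) (by nlinarith)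
  have hT1 : (1 - t) * (1 - r^2) / normSq ((1 - conj a * (r:ℂ)) - η * (a - r)) ≤ 1/(ε^2/4) :=
    div_le_div₀ (by norm_num) hnum (div_pos (pow_pos hε0 2) (by norm_num)) hNns
  have hT2 : (1 - t) * (1 - r^2) / normSq ((1 - conj a * (r:ℂ)) + η * (a - r)) ≤ 1/(ε^2/4) :=
    div_le_div₀ (by norm_num) hnum (div_pos (pow_pos hε0 2) (by norm_num)) hMns
  have hT10 : 0 ≤ (1 - t) * (1 - r^2) / normSq ((1 - conj a * (r:ℂ)) - η * (a - r)) :=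
    div_nonneg hnum0 (normSq_nonneg _)
  have hT20 : 0 ≤ (1 - t) * (1 - r^2) / normSq ((1 - conj a * (r:ℂ)) + η * (a - r)) :=
    div_nonneg hnum0 (normSq_nonneg _)
  have eb := abs_le.mp e
  have hq1 : 1/(1-r) ≤ (1+r)/(1-r) := by gcongr <;> linarith
  have hw0 : 0 ≤ (1-r)/(1+r) := by positivity
  linarith [eb.1]

lemma mobius_rigid (a η : ℂ) (ha : Complex.abs a < 1) (hη : Complex.abs η = 1) (K : ℝ)
    (hK : 0 ≤ K)
    (hb : ∀ r : ℝ, -1 < r → r < 1 → |rho (η * (a - r) / (1 - conj a * r)) - rho r| ≤ K) :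
    (a = 0 ∧ η = -1) ∨ (a = 0 ∧ η = 1) := by
  rcases step1 a η ha hη K hK hb with hn | hm
  · exact Or.inl (caseN a η ha hη K hK hb hn)
  · right
    have hη' : Complex.abs (-η) = 1 := by rwa [Complex.abs.map_neg]
    have hb' : ∀ r : ℝ, -1 < r → r < 1 →
        |rho ((-η) * (a - r) / (1 - conj a * r)) - rho r| ≤ K := by
      intro r h1 h2
      have : (-η) * (a - (r:ℂ)) / (1 - conj a * r) = -(η * (a - r) / (1 - conj a * r)) := by
        ring
      rw [this, rho_neg]
      exact hb r h1 h2
    have hN' : (1 - conj a) + (-η) * (1 - a) = 0 := by linear_combination hm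
    obtain ⟨ha0, hη1⟩ := caseN a (-η) ha hη' K hK hb' hN'
    exact ⟨ha0, by linear_combination -hη1⟩
lemma root_of_unity_ne_one {n : ℕ} (hn : 2 ≤ n) : Complex.exp (2*Real.pi*I/n) ≠ 1 := by
  intro h
  rw [Complex.exp_eq_one_iff] at h
  obtain ⟨m, hm⟩ := h
  have hn0 : (n:ℂ) ≠ 0 := Nat.cast_ne_zero.mpr (by omega)
  have hI : (2*(Real.pi:ℂ)*I) ≠ 0 := by
    refine mul_ne_zero (mul_ne_zero two_ne_zero ?_) I_ne_zero
    exact_mod_cast Real.pi_ne_zero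
  have h4 : (2*(Real.pi:ℂ)*I) = (m:ℂ) * (2*(Real.pi:ℂ)*I) * n := by
    field_simp at hm
    linear_combination (2*(Real.pi:ℂ)*I) * hm
  have h5 : (2*(Real.pi:ℂ)*I) * (1 - (m:ℂ)*n) = 0 := by linear_combination h4
  have h6 : (1:ℂ) - (m:ℂ)*n = 0 := by
    rcases mul_eq_zero.mp h5 with h | h
    · exact absurd h hI
    · exact h
  have h7 : ((m * n : ℤ) : ℂ) = 1 := by push_cast; linear_combination -h6
  have h8 : (m * n : ℤ) = 1 := by exact_mod_cast h7
  have hdvd : ((n:ℤ)) ∣ 1 := Dvd.intro_left m h8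
  have := Int.le_of_dvd one_pos hdvd
  omega

lemma deriv_ne_zero_of_injOn {f : ℂ → ℂ} {s : Set ℂ} (hs : IsOpen s)
    (hf : DifferentiableOn ℂ f s) (hinj : Set.InjOn f s) {z₀ : ℂ} (hz : z₀ ∈ s) :
    deriv f z₀ ≠ 0 := by
  intro hder
  have hA : AnalyticAt ℂ f z₀ := hf.analyticAt (hs.mem_nhds hz)
  have hA' : AnalyticAt ℂ (fun z => f z - f z₀) z₀ := hA.sub analyticAt_const
  have hne : ¬ ∀ᶠ z in 𝓝 z₀, f z - f z₀ = 0 := by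
    intro hev
    have h2 : ∀ᶠ z in 𝓝[≠] z₀, (f z - f z₀ = 0 ∧ z ∈ s) :=
      ((hev.and (hs.eventually_mem hz)).filter_mono nhdsWithin_le_nhds)
    have h3 : ∀ᶠ z in 𝓝[≠] z₀, z ≠ z₀ := eventually_mem_nhdsWithin
    obtain ⟨z, ⟨hfz, hzs⟩, hzne⟩ := (h2.and h3).exists
    exact hzne (hinj hzs hz (sub_eq_zero.mp hfz))
  have horder : analyticOrderAt (fun z => f z - f z₀) z₀ ≠ ⊤ :=
    fun h => hne (analyticOrderAt_eq_top.mp h)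
  obtain ⟨n, hn⟩ := ENat.ne_top_iff_exists.mp horder
  have hn' : analyticOrderAt (fun z => f z - f z₀) z₀ = n := hn.symm
  rw [hA'.analyticOrderAt_eq_natCast] at hn'
  obtain ⟨g, hg, hgz, hev⟩ := hn'
  have hn0 : n ≠ 0 := by
    intro h0
    subst h0
    have := hev.self_of_nhds
    simp at this
    exact hgz this.symm
  have hgd : HasDerivAt g (deriv g z₀) z₀ := hg.differentiableAt.hasDerivAt
  have hn1 : n ≠ 1 := by
    intro h1
    subst h1
    have ht : HasDerivAt (fun z => (z - z₀)^1 • g z) (g z₀) z₀ := by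
      simpa using ((hasDerivAt_id z₀).sub_const z₀).fun_mul hgd
    have hd : HasDerivAt (fun z => f z - f z₀) (g z₀) z₀ := ht.congr_of_eventuallyEq hev
    have h2 : deriv (fun z => f z - f z₀) z₀ = g z₀ := hd.deriv
    rw [deriv_sub_const, hder] at h2
    exact hgz h2.symm
  have hn2 : 2 ≤ n := by omega
  have hnC : (n:ℂ) ≠ 0 := Nat.cast_ne_zero.mpr hn0
  -- n-th root of g
  set c : ℂ := (g z₀) ^ ((n:ℂ)⁻¹) with hcdef
  have hcn : c ^ n = g z₀ := Complex.cpow_nat_inv_pow _ hn0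
  have hc0 : c ≠ 0 := by
    intro h
    rw [h, zero_pow hn0] at hcn
    exact hgz hcn.symm
  set v : ℂ → ℂ := fun z => c * Complex.exp (Complex.log (g z / g z₀) / n) with hvdef
  have hv : AnalyticAt ℂ v z₀ := by
    apply analyticAt_const.mul
    apply AnalyticAt.cexp
    apply AnalyticAt.div _ analyticAt_const hnC
    apply AnalyticAt.clog (hg.div analyticAt_const hgz)
    rw [Pi.div_apply, div_self hgz]
    exact Complex.one_mem_slitPlane
  have hv0 : v z₀ = c := by
    rw [hvdef]
    simp [div_self hgz, Complex.log_one]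
  have hvpow : ∀ᶠ z in 𝓝 z₀, (v z)^n = g z := by
    filter_upwards [hg.continuousAt.eventually_ne hgz] with z hgz'
    rw [hvdef]
    simp only
    rw [mul_pow, hcn, ← Complex.exp_nat_mul, mul_div_cancel₀ _ hnC,
      Complex.exp_log (div_ne_zero hgz' hgz)]
    field_simp
  set k : ℂ → ℂ := fun z => (z - z₀) * v z with hkdef
  have hk0 : k z₀ = 0 := by rw [hkdef]; simp
  have hkd : HasDerivAt k c z₀ := by
    have := ((hasDerivAt_id z₀).sub_const z₀).fun_mul (hv.differentiableAt.hasDerivAt)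
    simpa [hv0] using this
  have hkA : AnalyticAt ℂ k z₀ := (analyticAt_id.sub analyticAt_const).mul hv
  have hks : HasStrictDerivAt k c z₀ := by
    obtain ⟨p, hp⟩ := hkA
    have h1 := hp.hasStrictDerivAt
    have e : (p 1 fun _ => 1) = c := h1.hasDerivAt.deriv.symm.trans hkd.deriv
    exact e ▸ h1
  have hksF := hks.hasStrictFDerivAt_equiv hc0
  set L : ℂ → ℂ := hksF.localInverse k _ z₀ with hLdef
  have hlk : ∀ᶠ w in 𝓝 (0:ℂ), k (L w) = w := by
    have h := hksF.eventually_right_inverse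
    rw [← hLdef, hk0] at h
    exact h
  have hL0 : L 0 = z₀ := by
    have h := hksF.localInverse_apply_image
    rw [← hLdef, hk0] at h
    exact h
  have hLc : ContinuousAt L 0 := by
    have h := hksF.localInverse_continuousAt
    rw [← hLdef, hk0] at h
    exact h
  have hGood : ∀ᶠ w in 𝓝 (0:ℂ), k (L w) = w ∧ (L w ∈ s ∧
      ((fun z => f z - f z₀) (L w) = (L w - z₀)^n • g (L w) ∧ (v (L w))^n = g (L w))) := by
    refine hlk.and ?_
    have hP : ∀ᶠ z in 𝓝 z₀, z ∈ s ∧ ((fun z => f z - f z₀) z = (z - z₀)^n • g z ∧ (v z)^n = g z) :=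
      (hs.eventually_mem hz).and (hev.and hvpow)
    have h2 : ∀ᶠ w in 𝓝 (0:ℂ), L w ∈ {z | z ∈ s ∧
        ((fun z => f z - f z₀) z = (z - z₀)^n • g z ∧ (v z)^n = g z)} := by
      apply hLc.preimage_mem_nhds
      rw [hL0]
      exact hP
    exact h2
  obtain ⟨δ, hδ0, hδ⟩ := Metric.eventually_nhds_iff_ball.mp hGood
  set t0 : ℂ := ((δ/2 : ℝ) : ℂ) with ht0def
  have ht0ne : t0 ≠ 0 := by
    rw [ht0def]
    simpa using ne_of_gt (by linarith : (0:ℝ) < δ/2)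
  set ζ : ℂ := Complex.exp (2*Real.pi*I/n) with hζdef
  have hζabs : Complex.abs ζ = 1 := by
    rw [hζdef, show (2*(Real.pi:ℂ)*I/(n:ℂ)) = ((2*Real.pi/n : ℝ) : ℂ) * I by push_cast; ring]
    exact Complex.abs_exp_ofReal_mul_I _
  have hζn : ζ^n = 1 := by
    rw [hζdef, ← Complex.exp_nat_mul, mul_div_cancel₀ _ hnC, Complex.exp_two_pi_mul_I]
  have hζne : ζ ≠ 1 := root_of_unity_ne_one hn2
  have hmem1 : t0 ∈ ball (0:ℂ) δ := by
    rw [mem_ball_zero_iff, ht0def]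
    rw [Complex.norm_eq_abs, Complex.abs_ofReal, _root_.abs_of_nonneg (by linarith : (0:ℝ) ≤ δ/2)]
    linarith
  have hmem2 : t0*ζ ∈ ball (0:ℂ) δ := by
    rw [mem_ball_zero_iff, Complex.norm_eq_abs, map_mul, hζabs, mul_one, ht0def,
      Complex.abs_ofReal, _root_.abs_of_nonneg (by linarith : (0:ℝ) ≤ δ/2)]
    linarith
  obtain ⟨hk1, hs1, hf1, hv1⟩ := hδ _ hmem1
  obtain ⟨hk2, hs2, hf2, hv2⟩ := hδ _ hmem2
  have e1 : f (L t0) - f z₀ = t0^n := by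
    have : (fun z => f z - f z₀) (L t0) = (L t0 - z₀)^n • g (L t0) := hf1
    simp only [smul_eq_mul] at this
    rw [← hv1, ← mul_pow] at this
    have hkk : (L t0 - z₀) * v (L t0) = k (L t0) := by rw [hkdef]
    rw [hkk, hk1] at this
    exact this
  have e2 : f (L (t0*ζ)) - f z₀ = t0^n := by
    have : (fun z => f z - f z₀) (L (t0*ζ)) = (L (t0*ζ) - z₀)^n • g (L (t0*ζ)) := hf2
    simp only [smul_eq_mul] at this
    rw [← hv2, ← mul_pow] at this
    have hkk : (L (t0*ζ) - z₀) * v (L (t0*ζ)) = k (L (t0*ζ)) := by rw [hkdef]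
    rw [hkk, hk2, mul_pow, hζn, mul_one] at this
    exact this
  have heq : L t0 = L (t0*ζ) := by
    apply hinj hs1 hs2
    have : f (L t0) - f z₀ = f (L (t0*ζ)) - f z₀ := by rw [e1, e2]
    linear_combination this
  have ht : t0 = t0 * ζ := by
    rw [← hk2, ← heq, hk1]
  have : ζ = 1 := by
    have := mul_left_cancel₀ ht0ne (by rw [← ht, mul_one] : t0 * ζ = t0 * 1)
    exact this
  exact hζne this

lemma rotation_of_bij {G H : ℂ → ℂ}
    (hG : DifferentiableOn ℂ G (ball 0 1)) (hGm : MapsTo G (ball 0 1) (ball 0 1))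
    (hG0 : G 0 = 0)
    (hH : DifferentiableOn ℂ H (ball 0 1)) (hHm : MapsTo H (ball 0 1) (ball 0 1))
    (hH0 : H 0 = 0)
    (hHG : ∀ z ∈ ball (0:ℂ) 1, H (G z) = z) :
    ∃ η : ℂ, Complex.abs η = 1 ∧ ∀ z ∈ ball (0:ℂ) 1, G z = η * z := by
  have habs : ∀ z ∈ ball (0:ℂ) 1, Complex.abs (G z) = Complex.abs z := by
    intro z hzb
    have hz1 : Complex.abs z < 1 := by
      rw [← Complex.norm_eq_abs]; exact mem_ball_zero_iff.mp hzb
    have hGz1 : Complex.abs (G z) < 1 := by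
      rw [← Complex.norm_eq_abs]; exact mem_ball_zero_iff.mp (hGm hzb)
    have h1 : Complex.abs (G z) ≤ Complex.abs z :=
      Complex.abs_le_abs_of_mapsTo_ball_self hG hGm hG0 hz1
    have h2 : Complex.abs (H (G z)) ≤ Complex.abs (G z) :=
      Complex.abs_le_abs_of_mapsTo_ball_self hH hHm hH0 hGz1
    rw [hHG z hzb] at h2
    exact le_antisymm h1 h2
  have hhalf : (1/2 : ℂ) ∈ ball (0:ℂ) 1 := by
    rw [mem_ball_zero_iff]
    norm_num
  have hmaps' : MapsTo G (ball 0 1) (ball (G 0) 1) := by rwa [hG0]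
  have habs12 : Complex.abs ((1:ℂ)/2) = 1/2 := by
    rw [show (1:ℂ)/2 = ((1/2:ℝ):ℂ) by norm_num, Complex.abs_ofReal]
    norm_num
  have hd : ‖dslope G 0 (1/2 : ℂ)‖ = 1/1 := by
    rw [dslope_of_ne _ (by norm_num : (1/2:ℂ) ≠ 0), slope_def_field, hG0, sub_zero, sub_zero,
      Complex.norm_eq_abs, map_div₀, habs (1/2 : ℂ) hhalf, habs12]
    norm_num
  obtain ⟨C, hC, heq⟩ :=
    Complex.affine_of_mapsTo_ball_of_exists_norm_dslope_eq_div' hG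
      (hmaps'.mono_right ball_subset_closedBall) ⟨1/2, hhalf, hd⟩
  refine ⟨C, by simpa [Complex.norm_eq_abs] using hC, fun z hzb => ?_⟩
  have h := heq hzb
  simp only [hG0, zero_add, sub_zero, smul_eq_mul] at h
  rw [h, mul_comm]

lemma aut_is_mobius (φ : Complex.UnitDisc → Complex.UnitDisc)
    (hφ1 : ∃ F : ℂ → ℂ, DifferentiableOn ℂ F (Metric.ball 0 1) ∧
      ∀ z : Complex.UnitDisc, F ↑z = ↑(φ z))
    (hφ2 : Function.Bijective φ) :
    ∃ a η : ℂ, Complex.abs a < 1 ∧ Complex.abs η = 1 ∧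
      ∀ z : Complex.UnitDisc, (↑(φ z) : ℂ) = η * (a - ↑z) / (1 - conj a * ↑z) := by
  obtain ⟨F, hFd, hFeq⟩ := hφ1
  have hcoe : ∀ z : Complex.UnitDisc, (z:ℂ) ∈ ball (0:ℂ) 1 := fun z =>
    mem_ball_zero_iff.mpr (by rw [Complex.norm_eq_abs]; exact z.abs_lt_one)
  obtain ⟨ad, had⟩ := hφ2.2 0
  set a : ℂ := ↑ad with hadef
  have ha : Complex.abs a < 1 := ad.abs_lt_one
  set m : ℂ → ℂ := fun z => (a - z) / (1 - conj a * z) with hmdef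
  have hden : ∀ z ∈ ball (0:ℂ) 1, (1 : ℂ) - conj a * z ≠ 0 := by
    intro z hz h
    rw [sub_eq_zero] at h
    have := congrArg Complex.abs h
    rw [map_one, map_mul, Complex.abs_conj] at this
    rw [mem_ball_zero_iff, Complex.norm_eq_abs] at hz
    nlinarith [Complex.abs.nonneg a, Complex.abs.nonneg z]
  have hkey : ∀ z : ℂ, normSq (1 - conj a * z) - normSq (a - z)
      = (1 - normSq a) * (1 - normSq z) := by
    intro z
    simp only [normSq_apply, mul_re, mul_im, sub_re, sub_im, one_re, one_im, conj_re, conj_im]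
    ring
  have hmmaps : MapsTo m (ball 0 1) (ball 0 1) := by
    intro z hz
    rw [mem_ball_zero_iff, Complex.norm_eq_abs, hmdef]
    simp only
    rw [map_div₀, div_lt_one (Complex.abs.pos (hden z hz))]
    have hz1 : normSq z < 1 := by
      rw [mem_ball_zero_iff, Complex.norm_eq_abs] at hz
      rw [← Complex.sq_abs]
      nlinarith [Complex.abs.nonneg z]
    have ha1 : normSq a < 1 := by
      rw [← Complex.sq_abs]; nlinarith [Complex.abs.nonneg a]
    have := hkey z
    nlinarith [Complex.abs.nonneg (a - z), Complex.abs.nonneg (1 - conj a * z),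
      Complex.sq_abs (a - z), Complex.sq_abs (1 - conj a * z)]
  have hmd : DifferentiableOn ℂ m (ball 0 1) := by
    apply DifferentiableOn.div
    · exact (differentiableOn_const a).sub differentiableOn_id
    · exact (differentiableOn_const 1).sub ((differentiableOn_const (conj a)).mul
        differentiableOn_id)
    · exact hden
  have hminv : ∀ z ∈ ball (0:ℂ) 1, m (m z) = z := by
    intro z hz
    have h1 := hden z hz
    have h2 := hden (m z) (hmmaps hz)
    rw [hmdef] at h2 ⊢
    simp only at h2 ⊢
    rw [div_eq_iff h2]
    have hq := div_mul_cancel₀ (a - z) h1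
    linear_combination (-1:ℂ) * hq
  set G : ℂ → ℂ := fun z => F (m z) with hGdef
  have hGd : DifferentiableOn ℂ G (ball 0 1) := hFd.comp hmd hmmaps
  have hGcoe : ∀ w, (hw : w ∈ ball (0:ℂ) 1) →
      G w = ↑(φ (Complex.UnitDisc.mk (m w) (by
        have := hmmaps hw
        rw [mem_ball_zero_iff, Complex.norm_eq_abs] at this
        exact this))) := by
    intro w hw
    rw [hGdef]
    simp only
    rw [← hFeq]
    rfl
  have hGm : MapsTo G (ball 0 1) (ball 0 1) := by
    intro w hw
    rw [hGcoe w hw]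
    exact hcoe _
  have hG0 : G 0 = 0 := by
    have h0 : m 0 = a := by rw [hmdef]; simp
    rw [hGdef]
    simp only [h0]
    rw [hadef, hFeq ad, had]
    rfl
  set e := Equiv.ofBijective φ hφ2 with hedef
  set H : ℂ → ℂ := fun w =>
    if h : Complex.abs w < 1 then m ↑(e.symm (Complex.UnitDisc.mk w h)) else 0 with hHdef
  have hHball : ∀ w, H w ∈ ball (0:ℂ) 1 ∨ H w = 0 := by
    intro w
    simp only [hHdef]
    by_cases h : Complex.abs w < 1
    · left; rw [dif_pos h]; exact hmmaps (hcoe _)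
    · right; rw [dif_neg h]
  have hHm : MapsTo H (ball 0 1) (ball 0 1) := by
    intro w hw
    rw [mem_ball_zero_iff] at hw
    rw [Complex.norm_eq_abs] at hw
    simp only [hHdef]
    rw [dif_pos hw]
    exact hmmaps (hcoe _)
  have hGH : ∀ w ∈ ball (0:ℂ) 1, G (H w) = w := by
    intro w hw
    have hw' : Complex.abs w < 1 := by
      rw [← Complex.norm_eq_abs]; exact mem_ball_zero_iff.mp hw
    have hHw : H w = m ↑(e.symm (Complex.UnitDisc.mk w hw')) := by simp only [hHdef]; rw [dif_pos hw']
    rw [hHw, hGdef]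
    simp only
    rw [hminv _ (hcoe (e.symm (Complex.UnitDisc.mk w hw'))), hFeq]
    have : φ (e.symm (Complex.UnitDisc.mk w hw')) = Complex.UnitDisc.mk w hw' := by
      rw [hedef]
      exact (Equiv.ofBijective φ hφ2).apply_symm_apply _
    rw [this]
    rfl
  have hHG : ∀ z ∈ ball (0:ℂ) 1, H (G z) = z := by
    intro z hz
    have hmz : Complex.abs (m z) < 1 := by
      have := hmmaps hz
      rwa [mem_ball_zero_iff, Complex.norm_eq_abs] at this
    have hGz : G z = ↑(φ (Complex.UnitDisc.mk (m z) hmz)) := by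
      rw [hGdef]
      simp only
      rw [← hFeq]
      rfl
    have hGz1 : Complex.abs (G z) < 1 := by
      rw [hGz]; exact Complex.UnitDisc.abs_lt_one _
    have hHGz : H (G z) = m ↑(e.symm (Complex.UnitDisc.mk (G z) hGz1)) := by
      simp only [hHdef]; rw [dif_pos hGz1]
    rw [hHGz]
    have hmk : Complex.UnitDisc.mk (G z) hGz1 = φ (Complex.UnitDisc.mk (m z) hmz) := by
      apply Complex.UnitDisc.coe_injective
      exact hGz
    rw [hmk]
    have hsymm : e.symm (φ (Complex.UnitDisc.mk (m z) hmz)) = Complex.UnitDisc.mk (m z) hmz := by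
      rw [hedef]
      exact (Equiv.ofBijective φ hφ2).symm_apply_apply _
    rw [hsymm]
    exact hminv z hz
  have hinjG : InjOn G (ball 0 1) := by
    intro z1 h1 z2 h2 hGe
    rw [← hHG z1 h1, ← hHG z2 h2, hGe]
  have hHd : DifferentiableOn ℂ H (ball 0 1) := by
    intro w₀ hw₀
    apply DifferentiableAt.differentiableWithinAt
    have hz₀ : H w₀ ∈ ball (0:ℂ) 1 := hHm hw₀
    set z₀ := H w₀ with hz₀def
    have hGz₀ : G z₀ = w₀ := hGH w₀ hw₀
    have hGA : AnalyticAt ℂ G z₀ := hGd.analyticAt (isOpen_ball.mem_nhds hz₀)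
    have hder : deriv G z₀ ≠ 0 := deriv_ne_zero_of_injOn isOpen_ball hGd hinjG hz₀
    have hGs : HasStrictDerivAt G (deriv G z₀) z₀ := by
      obtain ⟨p, hp⟩ := hGA
      have h1 := hp.hasStrictDerivAt
      have h2 : deriv G z₀ = (p 1 fun _ => 1) := h1.hasDerivAt.deriv
      rw [h2]
      exact h1
    have hGF := hGs.hasStrictFDerivAt_equiv hder
    set L : ℂ → ℂ := hGF.localInverse G _ z₀ with hLdef
    have hL0 : L w₀ = z₀ := by
      have h := hGF.localInverse_apply_image
      rw [← hLdef, hGz₀] at h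
      exact h
    have hLc : ContinuousAt L w₀ := by
      have h := hGF.localInverse_continuousAt
      rw [← hLdef, hGz₀] at h
      exact h
    have hLdiff : DifferentiableAt ℂ L w₀ := by
      have h := hGF.to_localInverse
      rw [← hLdef, hGz₀] at h
      exact h.differentiableAt
    have hrinv : ∀ᶠ w in 𝓝 w₀, G (L w) = w := by
      have h := hGF.eventually_right_inverse
      rw [← hLdef, hGz₀] at h
      exact h
    have hLball : ∀ᶠ w in 𝓝 w₀, L w ∈ ball (0:ℂ) 1 := by
      apply hLc.preimage_mem_nhds
      rw [hL0]
      exact isOpen_ball.mem_nhds hz₀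
    have hHL : H =ᶠ[𝓝 w₀] L := by
      filter_upwards [hrinv, hLball, isOpen_ball.eventually_mem hw₀] with w h1 h2 h3
      have hHw : H w ∈ ball (0:ℂ) 1 := hHm h3
      exact hinjG hHw h2 (by rw [hGH w h3, h1])
    exact (hHL.differentiableAt_iff).mpr hLdiff
  have hH0 : H 0 = 0 := by
    have := hHG 0 (by simp)
    rwa [hG0] at this
  obtain ⟨η, hη, hrot⟩ := rotation_of_bij hGd hGm hG0 hHd hHm hH0 hHG
  refine ⟨a, η, ha, hη, fun z => ?_⟩
  have h1 : G (m ↑z) = η * m ↑z := hrot _ (hmmaps (hcoe z))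
  rw [hGdef] at h1
  simp only at h1
  rw [hminv _ (hcoe z), hFeq] at h1
  rw [h1, hmdef]
  simp only
  rw [mul_div_assoc]


-- ===================== backward direction helpers =====================

lemma comp_id_autOn (A : Set (𝔻 → ℂ)) (φ : 𝔻 → 𝔻) (h : ∀ z, φ z = z) : CompAutOn A φ := by
  have hcomp : ∀ f : 𝔻 → ℂ, f ∘ φ = f := by
    intro f; funext z; simp [Function.comp, h z]
  refine ⟨fun f hf => by rw [hcomp]; exact hf, ?_, ?_⟩
  · intro f₁ h₁ f₂ h₂ he
    simpa [hcomp] using he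
  · intro f hf
    exact ⟨f, hf, hcomp f⟩

lemma memHinf_comp_neg (g : 𝔻 → ℂ) (hg : MemHinf g) (φ : 𝔻 → 𝔻)
    (h : ∀ z : 𝔻, (↑(φ z) : ℂ) = -(z:ℂ)) : MemHinf (g ∘ φ) := by
  obtain ⟨⟨Fg, hFd, hFeq⟩, M, hM⟩ := hg
  refine ⟨⟨fun w => Fg (-w), ?_, ?_⟩, M, fun z => hM (φ z)⟩
  · apply hFd.comp differentiable_neg.differentiableOn
    intro w hw
    rw [mem_ball_zero_iff] at hw ⊢
    simpa using hw
  · intro z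
    show Fg (-(z:ℂ)) = g (φ z)
    rw [← h z, hFeq (φ z)]

lemma comp_neg_autOn (φ : 𝔻 → 𝔻) (h : ∀ z : 𝔻, (↑(φ z) : ℂ) = -(z:ℂ)) :
    CompAutOn (psiH psiD) φ := by
  have hinv : ∀ z, φ (φ z) = z := fun z =>
    Complex.UnitDisc.coe_injective (by rw [h, h, neg_neg])
  have hpsi : ∀ z : 𝔻, psiD (φ z) = psiD z := by
    intro z
    show Complex.exp (((↑(φ z):ℂ) + 1) / ((↑(φ z):ℂ) - 1)) *
        Complex.exp (((↑(φ z):ℂ) - 1) / ((↑(φ z):ℂ) + 1)) = psiD z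
    rw [h z, show (-(z:ℂ)) + 1 = -((z:ℂ) - 1) by ring,
      show (-(z:ℂ)) - 1 = -((z:ℂ) + 1) by ring]
    simp only [neg_div_neg_eq]
    exact mul_comm _ _
  have hmaps : ∀ f ∈ psiH psiD, f ∘ φ ∈ psiH psiD := by
    rintro f ⟨g, hg, rfl⟩
    refine ⟨g ∘ φ, memHinf_comp_neg g hg φ h, ?_⟩
    funext z
    show psiD (φ z) * g (φ z) = psiD z * (g ∘ φ) z
    rw [hpsi z]
    rfl
  refine ⟨hmaps, ?_, ?_⟩
  · intro f₁ h₁ f₂ h₂ he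
    funext z
    have := congrFun he (φ z)
    simpa [Function.comp, hinv z] using this
  · intro f hf
    refine ⟨f ∘ φ, hmaps f hf, ?_⟩
    funext z
    show f (φ (φ z)) = f z
    rw [hinv z]

/-- for `ψ(z) = exp((z+1)/(z-1)) exp((z-1)/(z+1))` and `φ ∈ Aut(𝔻)`,
the composition operator `C_φ` is a well-defined algebra automorphism of `ψ H^∞` iff
`φ = z` or `φ = -z`. -/
theorem stmt_18 (φ : 𝔻 → 𝔻) (hφ : IsDiscAut φ) :
    CompAutOn
        (psiH (fun z : 𝔻 =>
          Complex.exp (((z : ℂ) + 1) / ((z : ℂ) - 1)) *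
            Complex.exp (((z : ℂ) - 1) / ((z : ℂ) + 1)))) φ ↔
      (∀ z : 𝔻, φ z = z) ∨ (∀ z : 𝔻, (↑(φ z) : ℂ) = -(z : ℂ)) := by
  constructor
  · intro hc
    obtain ⟨K, hK0, hKb⟩ := bound_of_compAut φ hc
    obtain ⟨a, η, ha, hη, hmob⟩ := aut_is_mobius φ hφ.1 hφ.2
    have hb : ∀ r : ℝ, -1 < r → r < 1 →
        |rho (η * (a - r) / (1 - (starRingEnd ℂ) a * r)) - rho r| ≤ K := by
      intro r h1 h2
      have hr : Complex.abs ((r:ℝ):ℂ) < 1 := by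
        rw [Complex.abs_ofReal]; exact abs_lt.mpr ⟨h1, h2⟩
      have := hKb (Complex.UnitDisc.mk r hr)
      rw [hmob (Complex.UnitDisc.mk r hr)] at this
      exact this
    rcases mobius_rigid a η ha hη K hK0 hb with ⟨ha0, hη1⟩ | ⟨ha0, hη1⟩
    · left
      intro z
      apply Complex.UnitDisc.coe_injective
      rw [hmob z, ha0, hη1]
      simp
    · right
      intro z
      rw [hmob z, ha0, hη1]
      simp
  · rintro (h | h)
    · exact comp_id_autOn _ φ h
    · exact comp_neg_autOn φ h
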